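/- Let B be a braided category. The assignments E ↦ ς^E, where ς^E_X := ρ_X ∘ E_{X,𝟙} ∘ ρ_X⁻¹ (the component of E at the monoidal unit, transported along the right unitor ρ_X : X⊗𝟙 ≅ X), and ς ↦ E^ς, where E^ς_{X,M} := (τ_{M,X} ∘ τ_{X,M})⁻¹ ∘ (ς_X ⊗ 𝟙_M) : X⊗M → X⊗M, are mutually inverse bijections between the set of braided module structures on B over itself and the set of anti-twists on B. -/

import Mathlib

open CategoryTheory MonoidalCategory

variable {B : Type*} [Category B] [MonoidalCategory B] [BraidedCategory B]

/-- An anti-twist on a braided category `B`: a natural automorphism `ς` of the identity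
functor such that `ς_{X⊗Y} = (τ_{Y,X} ∘ τ_{X,Y})⁻¹ ∘ (ς_X ⊗ ς_Y)`. -/
def IsAntiTwist (ς : ∀ X : B, X ⟶ X) : Prop :=
  (∀ X : B, IsIso (ς X)) ∧
  (∀ {X Y : B} (f : X ⟶ Y), ς X ≫ f = f ≫ ς Y) ∧
  (∀ X Y : B, ς (X ⊗ Y) = (ς X ⊗ₘ ς Y) ≫ (β_ Y X).inv ≫ (β_ X Y).inv)

/-- A braided module structure on `B` over itself (action `X·M := X⊗M`): a family of
isomorphisms `E_{X,M} : X⊗M → X⊗M`, natural in `X` and `M`, satisfying (C1) and (C2). -/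
def IsBraidedModuleSelf (E : ∀ X M : B, X ⊗ M ⟶ X ⊗ M) : Prop :=
  (∀ X M : B, IsIso (E X M)) ∧
  (∀ {X X' M M' : B} (f : X ⟶ X') (g : M ⟶ M'),
      (f ⊗ₘ g) ≫ E X' M' = E X M ≫ (f ⊗ₘ g)) ∧
  -- (C1): `E_{Y,X⊗M} = ((τ_{Y,X})⁻¹ ⊗ 𝟙_M) ∘ (𝟙_X ⊗ E_{Y,M}) ∘ ((τ_{X,Y})⁻¹ ⊗ 𝟙_M)`
  -- as endomorphisms of `Y⊗X⊗M` (with associators made explicit).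
  (∀ X Y M : B,
      E Y (X ⊗ M) =
        (α_ Y X M).inv ≫ ((β_ X Y).inv ▷ M) ≫ (α_ X Y M).hom ≫
          (X ◁ E Y M) ≫ (α_ X Y M).inv ≫ ((β_ Y X).inv ▷ M) ≫ (α_ Y X M).hom) ∧
  -- (C2): `E_{Y⊗X,M} = E_{Y,X⊗M} ∘ (𝟙_Y ⊗ E_{X,M})`
  (∀ X Y M : B,
      E (Y ⊗ X) M =
        (α_ Y X M).hom ≫ (Y ◁ E X M) ≫ E Y (X ⊗ M) ≫ (α_ Y X M).inv)

/-- The assignment `E ↦ ς^E`, where `ς^E_X := ρ_X ∘ E_{X,𝟙} ∘ ρ_X⁻¹`. -/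
def antiTwistOfBraidedModuleSelf (E : ∀ X M : B, X ⊗ M ⟶ X ⊗ M) : ∀ X : B, X ⟶ X :=
  fun X => (ρ_ X).inv ≫ E X (𝟙_ B) ≫ (ρ_ X).hom

/-- The assignment `ς ↦ E^ς`, where `E^ς_{X,M} := (τ_{M,X} ∘ τ_{X,M})⁻¹ ∘ (ς_X ⊗ 𝟙_M)`. -/
def braidedModuleSelfOfAntiTwist (ς : ∀ X : B, X ⟶ X) : ∀ X M : B, X ⊗ M ⟶ X ⊗ M :=
  fun X M => (ς X ▷ M) ≫ (β_ M X).inv ≫ (β_ X M).inv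

section Aux
open BraidedCategory

private lemma yb' (A X C : B) :
    (β_ A X).hom ▷ C ≫ (α_ X A C).hom ≫ X ◁ (β_ A C).hom ≫ (α_ X C A).inv ≫ (β_ X C).hom ▷ A =
    (α_ A X C).hom ≫ A ◁ (β_ X C).hom ≫ (α_ A C X).inv ≫ (β_ A C).hom ▷ X ≫
      (α_ C A X).hom ≫ C ◁ (β_ A X).hom ≫ (α_ C X A).inv := by
  rw [← cancel_epi (α_ A X C).inv, ← cancel_mono (α_ C X A).hom]
  simpa [Category.assoc] using yang_baxter A X C

private lemma yb2 (A X C : B) :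
    A ◁ (β_ X C).hom ≫ (α_ A C X).inv ≫ (β_ A C).hom ▷ X ≫ (α_ C A X).hom ≫ C ◁ (β_ A X).hom =
    (α_ A X C).inv ≫ (β_ A X).hom ▷ C ≫ (α_ X A C).hom ≫ X ◁ (β_ A C).hom ≫
      (α_ X C A).inv ≫ (β_ X C).hom ▷ A ≫ (α_ C X A).hom := (yang_baxter A X C).symm

private lemma tailC2 (X Y M : B) :
    ((β_ X Y).inv ▷ M) ≫ ((β_ Y X).inv ▷ M) ≫ (β_ M (Y ⊗ X)).inv ≫ (β_ (Y ⊗ X) M).inv =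
    (α_ Y X M).hom ≫ (Y ◁ (β_ M X).inv) ≫ (Y ◁ (β_ X M).inv) ≫
      (β_ (X ⊗ M) Y).inv ≫ (β_ Y (X ⊗ M)).inv ≫ (α_ Y X M).inv := by
  rw [← cancel_mono (α_ Y X M).hom]
  simp only [Category.assoc, Iso.inv_hom_id, Category.comp_id]
  apply eq_of_inv_eq_inv
  simp
  slice_lhs 4 8 => rw [yb' M Y X]
  slice_lhs 1 5 => rw [yb2 Y X M]
  simp only [Category.assoc, Iso.hom_inv_id_assoc, Iso.inv_hom_id_assoc]
  slice_lhs 7 11 => rw [yb' M X Y]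
  slice_rhs 5 9 => rw [yb2 X M Y]
  simp only [Category.assoc]

private lemma unitConj (X Y : B) (f : Y ⟶ Y) :
    (Y ◁ (ρ_ X).inv) ≫ (α_ Y X (𝟙_ B)).inv ≫ ((β_ X Y).inv ▷ (𝟙_ B)) ≫ (α_ X Y (𝟙_ B)).hom ≫
      (X ◁ ((ρ_ Y).hom ≫ f ≫ (ρ_ Y).inv)) ≫ (α_ X Y (𝟙_ B)).inv ≫ ((β_ Y X).inv ▷ (𝟙_ B)) ≫
      (α_ Y X (𝟙_ B)).hom ≫ (Y ◁ (ρ_ X).hom) =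
    (f ▷ X) ≫ (β_ X Y).inv ≫ (β_ Y X).inv := by
  simp [MonoidalCategory.whiskerLeft_comp]

/-- Any braided module structure is determined by its components at the unit. -/
private lemma roundtrip (E : ∀ X M : B, X ⊗ M ⟶ X ⊗ M)
    (hnat : ∀ {X X' M M' : B} (f : X ⟶ X') (g : M ⟶ M'),
      (f ⊗ₘ g) ≫ E X' M' = E X M ≫ (f ⊗ₘ g))
    (hC1 : ∀ X Y M : B,
      E Y (X ⊗ M) =
        (α_ Y X M).inv ≫ ((β_ X Y).inv ▷ M) ≫ (α_ X Y M).hom ≫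
          (X ◁ E Y M) ≫ (α_ X Y M).inv ≫ ((β_ Y X).inv ▷ M) ≫ (α_ Y X M).hom)
    (Y X : B) :
    E Y X = (((ρ_ Y).inv ≫ E Y (𝟙_ B) ≫ (ρ_ Y).hom) ▷ X) ≫ (β_ X Y).inv ≫ (β_ Y X).inv := by
  have key := hnat (𝟙 Y) (ρ_ X).hom
  simp only [id_tensorHom] at key
  have h1 : E Y X = (Y ◁ (ρ_ X).inv) ≫ E Y (X ⊗ 𝟙_ B) ≫ (Y ◁ (ρ_ X).hom) := by
    rw [← key, ← MonoidalCategory.whiskerLeft_comp_assoc, Iso.inv_hom_id,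
      MonoidalCategory.whiskerLeft_id, Category.id_comp]
  rw [h1, hC1 X Y (𝟙_ B)]
  set f : Y ⟶ Y := (ρ_ Y).inv ≫ E Y (𝟙_ B) ≫ (ρ_ Y).hom with hf
  have hE : E Y (𝟙_ B) = (ρ_ Y).hom ≫ f ≫ (ρ_ Y).inv := by rw [hf]; simp
  rw [hE]
  simpa using unitConj X Y f

end Aux

/-- The assignments `E ↦ ς^E` and `ς ↦ E^ς` are mutually inverse bijections between the
set of braided module structures on `B` over itself and the set of anti-twists on `B`. -/
theorem braided_module_self_antitwist_bijection :
    (∀ E : ∀ X M : B, X ⊗ M ⟶ X ⊗ M, IsBraidedModuleSelf E →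
      IsAntiTwist (antiTwistOfBraidedModuleSelf E)) ∧
    (∀ ς : ∀ X : B, X ⟶ X, IsAntiTwist ς →
      IsBraidedModuleSelf (braidedModuleSelfOfAntiTwist ς)) ∧
    (∀ E : ∀ X M : B, X ⊗ M ⟶ X ⊗ M, IsBraidedModuleSelf E →
      braidedModuleSelfOfAntiTwist (antiTwistOfBraidedModuleSelf E) = E) ∧
    (∀ ς : ∀ X : B, X ⟶ X, IsAntiTwist ς →
      antiTwistOfBraidedModuleSelf (braidedModuleSelfOfAntiTwist ς) = ς) := by
  open BraidedCategory in
  have part3 : ∀ E : ∀ X M : B, X ⊗ M ⟶ X ⊗ M, IsBraidedModuleSelf E →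
      braidedModuleSelfOfAntiTwist (antiTwistOfBraidedModuleSelf E) = E := by
    intro E ⟨hiso, hnat, hC1, hC2⟩
    funext X M
    exact (roundtrip E hnat hC1 X M).symm
  refine ⟨?_, ?_, part3, ?_⟩
  · -- E ↦ ς^E is an anti-twist
    intro E hE
    obtain ⟨hiso, hnat, hC1, hC2⟩ := hE
    refine ⟨?_, ?_, ?_⟩
    · intro X
      haveI := hiso X (𝟙_ B)
      unfold antiTwistOfBraidedModuleSelf
      infer_instance
    · intro X Y f
      have h := hnat f (𝟙 (𝟙_ B))
      simp only [tensorHom_id] at h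
      unfold antiTwistOfBraidedModuleSelf
      simp only [Category.assoc]
      rw [← rightUnitor_naturality f, ← reassoc_of% h, rightUnitor_inv_naturality_assoc]
    · intro X Y
      have h2 := hC2 Y X (𝟙_ B)
      rw [roundtrip E hnat hC1 X (Y ⊗ 𝟙_ B)] at h2
      unfold antiTwistOfBraidedModuleSelf
      rw [h2]
      set f : X ⟶ X := (ρ_ X).inv ≫ E X (𝟙_ B) ≫ (ρ_ X).hom with hfd
      set g : Y ⟶ Y := (ρ_ Y).inv ≫ E Y (𝟙_ B) ≫ (ρ_ Y).hom with hgd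
      have hEY : E Y (𝟙_ B) = (ρ_ Y).hom ≫ g ≫ (ρ_ Y).inv := by rw [hgd]; simp
      rw [hEY]
      simp only [MonoidalCategory.whiskerLeft_comp, Category.assoc, MonoidalCategory.tensorHom_def,
        rightUnitor_tensor_hom, Iso.inv_hom_id_assoc]
      slice_lhs 5 6 => rw [whisker_exchange]
      slice_lhs 4 5 => rw [whisker_exchange]
      slice_lhs 3 4 => rw [whisker_exchange]
      slice_lhs 2 3 => rw [← associator_naturality_left]
      slice_lhs 1 2 => rw [← rightUnitor_inv_naturality]
      slice_lhs 2 4 => rw [← rightUnitor_tensor_hom, Iso.inv_hom_id]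
      simp only [Category.id_comp, Category.assoc]
      slice_lhs 3 4 => rw [braiding_inv_naturality_right]
      slice_lhs 4 5 => rw [braiding_inv_naturality_left]
      simp only [Category.assoc, ← MonoidalCategory.whiskerLeft_comp, Iso.inv_hom_id,
        MonoidalCategory.whiskerLeft_id, Category.comp_id]
  · -- ς ↦ E^ς is a braided module structure
    intro ς ⟨hiso, hnat, hmul⟩
    refine ⟨?_, ?_, ?_, ?_⟩
    · intro X M
      haveI := hiso X
      unfold braidedModuleSelfOfAntiTwist
      infer_instance
    · intro X X' M M' f g
      unfold braidedModuleSelfOfAntiTwist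
      rw [MonoidalCategory.tensorHom_def]
      slice_lhs 2 3 => rw [whisker_exchange]
      slice_lhs 1 2 => rw [← comp_whiskerRight, ← hnat f, comp_whiskerRight]
      simp [whisker_exchange, MonoidalCategory.tensorHom_def]
    · intro X Y M
      unfold braidedModuleSelfOfAntiTwist
      simp only [MonoidalCategory.whiskerLeft_comp, Category.assoc]
      slice_rhs 4 5 => rw [← MonoidalCategory.whiskerLeft_comp,
        braiding_inv_naturality_left, MonoidalCategory.whiskerLeft_comp]
      slice_rhs 5 6 => rw [← MonoidalCategory.whiskerLeft_comp,
        braiding_inv_naturality_right, MonoidalCategory.whiskerLeft_comp]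
      simp only [braiding_tensor_left_inv, braiding_tensor_right_inv,
        MonoidalCategory.whiskerLeft_comp, Category.assoc, Iso.inv_hom_id_assoc,
        Iso.hom_inv_id_assoc, pentagon_assoc]
      slice_lhs 1 2 => rw [associator_inv_naturality_left]
      slice_lhs 2 3 => rw [← comp_whiskerRight, braiding_inv_naturality_left, comp_whiskerRight]
      slice_lhs 3 4 => rw [associator_naturality_middle]
      slice_lhs 4 5 => rw [← MonoidalCategory.whiskerLeft_comp,
        braiding_inv_naturality_left, MonoidalCategory.whiskerLeft_comp]
      slice_lhs 5 6 => rw [← MonoidalCategory.whiskerLeft_comp,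
        braiding_inv_naturality_right, MonoidalCategory.whiskerLeft_comp]
      simp only [Category.assoc]
    · intro X Y M
      unfold braidedModuleSelfOfAntiTwist
      rw [hmul Y X]
      simp only [comp_whiskerRight, MonoidalCategory.whiskerLeft_comp, Category.assoc,
        MonoidalCategory.tensorHom_def]
      slice_lhs 3 6 => rw [tailC2 X Y M]
      slice_rhs 4 5 => rw [whisker_exchange]
      slice_rhs 3 4 => rw [whisker_exchange]
      slice_rhs 2 3 => rw [whisker_exchange]
      slice_rhs 1 2 => rw [← associator_naturality_left]
      slice_rhs 2 3 => rw [← associator_naturality_middle]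
      simp only [Category.assoc]
  · -- ς ↦ E^ς ↦ ς roundtrip
    intro ς hς
    funext X
    unfold antiTwistOfBraidedModuleSelf braidedModuleSelfOfAntiTwist
    simp [braiding_inv_tensorUnit_left, braiding_inv_tensorUnit_right]
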